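/- Let V be an n×n matrix and α a scalar. Then ∑_{A ⊆ {1,…,n}} (−α)^{|A|} (∏_{j∈A} V_{jj}) · Per_α(V restricted to A^c × A^c) = Per⁰_α(V), where Per⁰_α(V) = ∑_{σ ∈ S_n, σ has no fixed points} α^{m(σ)} ∏_i V_{iσ(i)}. -/

import Mathlib

open Matrix Finset Equiv

/-- The number of cycles of a permutation, counting fixed points as cycles of length one. -/
noncomputable def numCycles {β : Type*} [Fintype β] [DecidableEq β] (σ : Equiv.Perm β) : ℕ :=
  σ.cycleType.card + (Finset.univ.filter fun x => σ x = x).card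

/-- The `α`-permanent `Per_α(A) = ∑_{σ} α^{m(σ)} ∏_i A_{i σ(i)}`. -/
noncomputable def perAlpha {β : Type*} [Fintype β] [DecidableEq β] (α : ℂ)
    (A : Matrix β β ℂ) : ℂ :=
  ∑ σ : Equiv.Perm β, α ^ numCycles σ * ∏ i, A i (σ i)

lemma numCycles_ofSubtype {n : ℕ} (A : Finset (Fin n))
    (τ : Equiv.Perm {x // x ∈ Aᶜ}) :
    numCycles (Equiv.Perm.ofSubtype τ) = numCycles τ + A.card := by
  unfold numCycles
  rw [Equiv.Perm.cycleType_ofSubtype]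
  have hsplit : (Finset.univ.filter fun x : Fin n => Equiv.Perm.ofSubtype τ x = x)
      = (Aᶜ.filter fun x => Equiv.Perm.ofSubtype τ x = x) ∪ A := by
    ext x
    simp only [Finset.mem_filter, Finset.mem_union, Finset.mem_univ, true_and,
      Finset.mem_compl]
    by_cases hx : x ∈ A
    · simp [hx, Equiv.Perm.ofSubtype_apply_of_not_mem τ (by simpa using hx : ¬ x ∈ Aᶜ)]
    · simp [hx, Finset.mem_compl]
  have hdisj : Disjoint (Aᶜ.filter fun x => Equiv.Perm.ofSubtype τ x = x) A := by
    refine Finset.disjoint_left.2 fun x hx hx' => ?_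
    exact (Finset.mem_compl.1 (Finset.mem_filter.1 hx).1) hx'
  have hcard : (Finset.univ.filter fun y : {x // x ∈ Aᶜ} => τ y = y).card
      = (Aᶜ.filter fun x => Equiv.Perm.ofSubtype τ x = x).card := by
    refine Finset.card_bij (fun y _ => y.val) ?_ ?_ ?_
    · intro y hy
      simp only [Finset.mem_filter, Finset.mem_univ, true_and] at hy
      simp only [Finset.mem_filter]
      refine ⟨y.2, ?_⟩
      rw [Equiv.Perm.ofSubtype_apply_of_mem τ y.2, hy]
    · intro a _ b _ h; exact Subtype.ext h
    · intro x hx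
      simp only [Finset.mem_filter] at hx
      refine ⟨⟨x, hx.1⟩, ?_, rfl⟩
      simp only [Finset.mem_filter, Finset.mem_univ, true_and]
      apply Subtype.ext
      exact (Equiv.Perm.ofSubtype_apply_of_mem τ hx.1).symm.trans hx.2
  rw [hsplit, Finset.card_union_of_disjoint hdisj, hcard, ← Nat.add_assoc]

lemma key {n : ℕ} (α : ℂ) (V : Matrix (Fin n) (Fin n) ℂ) (A : Finset (Fin n)) :
    (-α) ^ A.card * (∏ j ∈ A, V j j) *
        perAlpha α (V.submatrix (Subtype.val : {x // x ∈ Aᶜ} → Fin n)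
          (Subtype.val : {x // x ∈ Aᶜ} → Fin n))
      = ∑ σ ∈ Finset.univ.filter (fun σ : Equiv.Perm (Fin n) => ∀ a ∈ A, σ a = a),
          (-1 : ℂ) ^ A.card * (α ^ numCycles σ * ∏ i, V i (σ i)) := by
  rw [perAlpha, Finset.mul_sum]
  refine Finset.sum_bij (fun τ _ => Equiv.Perm.ofSubtype τ) ?_ ?_ ?_ ?_
  · intro τ _
    simp only [Finset.mem_filter, Finset.mem_univ, true_and]
    intro a ha
    exact Equiv.Perm.ofSubtype_apply_of_not_mem τ (by simpa using ha)
  · intro τ₁ _ τ₂ _ h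
    refine Equiv.ext fun y => Subtype.ext ?_
    have hy := congrArg (fun σ : Equiv.Perm (Fin n) => σ y.val) h
    rwa [Equiv.Perm.ofSubtype_apply_of_mem τ₁ y.2,
      Equiv.Perm.ofSubtype_apply_of_mem τ₂ y.2] at hy
  · intro σ hσ
    simp only [Finset.mem_filter, Finset.mem_univ, true_and] at hσ
    have h₁ : ∀ x : Fin n, x ∈ Aᶜ ↔ σ x ∈ Aᶜ := by
      intro x
      simp only [Finset.mem_compl]
      constructor
      · intro hx hc
        have h2 : σ (σ x) = σ x := hσ _ hc
        have h3 : σ x = x := σ.injective h2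
        exact hx (h3 ▸ hc)
      · intro hx hc
        exact hx (by rw [hσ x hc]; exact hc)
    refine ⟨σ.subtypePerm (fun x => (h₁ x).symm), Finset.mem_univ _, ?_⟩
    exact Equiv.Perm.ofSubtype_subtypePerm (fun x => (h₁ x).symm) fun x hx => by
      simp only [Finset.mem_compl]
      exact fun hc => hx (hσ x hc)
  · intro τ _
    have hprod : (∏ i : {x // x ∈ Aᶜ},
        V.submatrix (Subtype.val : {x // x ∈ Aᶜ} → Fin n) Subtype.val i (τ i))
        = ∏ x ∈ Aᶜ, V x (Equiv.Perm.ofSubtype τ x) := by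
      rw [Finset.prod_subtype Aᶜ (fun x => Iff.rfl)
        (fun x => V x (Equiv.Perm.ofSubtype τ x))]
      refine Finset.prod_congr rfl fun y _ => ?_
      simp [Matrix.submatrix_apply, Equiv.Perm.ofSubtype_apply_of_mem τ y.2]
    have hfull : (∏ j ∈ A, V j j) * ∏ x ∈ Aᶜ, V x (Equiv.Perm.ofSubtype τ x)
        = ∏ i, V i (Equiv.Perm.ofSubtype τ i) := by
      rw [← Finset.prod_mul_prod_compl A (fun i => V i (Equiv.Perm.ofSubtype τ i))]
      congr 1
      refine Finset.prod_congr rfl fun j hj => ?_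
      rw [Equiv.Perm.ofSubtype_apply_of_not_mem τ (by simpa using hj)]
    rw [hprod, numCycles_ofSubtype A τ]
    rw [← hfull]
    rw [neg_pow, pow_add]
    ring


/-- `∑_{A ⊆ {1,…,n}} (-α)^{|A|} (∏_{j∈A} V_{jj}) Per_α(V|_{A^c × A^c}) = Per⁰_α(V)`,
where `Per⁰_α` sums only over fixed-point-free permutations. -/
theorem stmt4 (n : ℕ) (α : ℂ) (V : Matrix (Fin n) (Fin n) ℂ) :
    ∑ A ∈ (Finset.univ : Finset (Fin n)).powerset,
      (-α) ^ A.card * (∏ j ∈ A, V j j) *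
        perAlpha α (V.submatrix (Subtype.val : {x // x ∈ Aᶜ} → Fin n)
          (Subtype.val : {x // x ∈ Aᶜ} → Fin n))
      = ∑ σ ∈ Finset.univ.filter (fun σ : Equiv.Perm (Fin n) => ∀ i, σ i ≠ i),
          α ^ numCycles σ * ∏ i, V i (σ i) := by
  have h1 : ∀ A ∈ (Finset.univ : Finset (Fin n)).powerset,
      (-α) ^ A.card * (∏ j ∈ A, V j j) *
        perAlpha α (V.submatrix (Subtype.val : {x // x ∈ Aᶜ} → Fin n)
          (Subtype.val : {x // x ∈ Aᶜ} → Fin n))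
      = ∑ σ : Equiv.Perm (Fin n),
          if ∀ a ∈ A, σ a = a then (-1 : ℂ) ^ A.card * (α ^ numCycles σ * ∏ i, V i (σ i))
          else 0 := by
    intro A _
    rw [key α V A, Finset.sum_filter]
  rw [Finset.sum_congr rfl h1, Finset.sum_comm]
  rw [Finset.sum_filter]
  refine Finset.sum_congr rfl fun σ _ => ?_
  have hfilter : (Finset.univ : Finset (Fin n)).powerset.filter
      (fun A => ∀ a ∈ A, σ a = a)
      = (Finset.univ.filter fun x => σ x = x).powerset := by
    ext A
    simp only [Finset.mem_filter, Finset.mem_powerset, Finset.subset_univ, true_and,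
      Finset.subset_iff, Finset.mem_univ]
    exact ⟨fun h x hx => h.2 x hx, fun h => ⟨fun x _ => trivial, fun x hx => h x hx⟩⟩
  have hsgn : (∑ m ∈ (Finset.univ.filter fun x => σ x = x).powerset, (-1 : ℂ) ^ m.card)
      = if (Finset.univ.filter fun x => σ x = x) = ∅ then 1 else 0 := by
    have := Finset.sum_powerset_neg_one_pow_card
      (x := (Finset.univ.filter fun x => σ x = x))
    calc (∑ m ∈ (Finset.univ.filter fun x => σ x = x).powerset, (-1 : ℂ) ^ m.card)
        = ((∑ m ∈ (Finset.univ.filter fun x => σ x = x).powerset, (-1 : ℤ) ^ m.card : ℤ) : ℂ) := by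
          push_cast; rfl
      _ = _ := by rw [this]; split <;> simp
  calc (∑ A ∈ (Finset.univ : Finset (Fin n)).powerset,
        if ∀ a ∈ A, σ a = a then (-1 : ℂ) ^ A.card * (α ^ numCycles σ * ∏ i, V i (σ i)) else 0)
      = ∑ A ∈ (Finset.univ : Finset (Fin n)).powerset.filter (fun A => ∀ a ∈ A, σ a = a),
        (-1 : ℂ) ^ A.card * (α ^ numCycles σ * ∏ i, V i (σ i)) := (Finset.sum_filter _ _).symm
    _ = ∑ A ∈ (Finset.univ.filter fun x => σ x = x).powerset,
        (-1 : ℂ) ^ A.card * (α ^ numCycles σ * ∏ i, V i (σ i)) := by rw [hfilter]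
    _ = (∑ A ∈ (Finset.univ.filter fun x => σ x = x).powerset, (-1 : ℂ) ^ A.card) *
        (α ^ numCycles σ * ∏ i, V i (σ i)) := by rw [Finset.sum_mul]
    _ = (if ∀ i, σ i ≠ i then α ^ numCycles σ * ∏ i, V i (σ i) else 0) := by
        rw [hsgn]
        have hiff : ((Finset.univ.filter fun x => σ x = x) = ∅) ↔ (∀ i, σ i ≠ i) := by
          rw [Finset.filter_eq_empty_iff]
          simp
        by_cases h : ∀ i, σ i ≠ i
        · rw [if_pos (hiff.2 h), if_pos h, one_mul]
        · rw [if_neg (fun he => h (hiff.1 he)), if_neg h, zero_mul]
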